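/- Fix distinct integers r and s with 0 ≤ r,s ≤ d. Then the following are equivalent: (i) in the graph Δ, vertex r is adjacent to vertex s and to no other vertices; (ii) a*_r ≠ θ*_0 and u_i(θ_s)(θ*_0 − a*_r) = u_i(θ_r)(θ*_i − a*_r) for 0 ≤ i ≤ d. -/

import Mathlib

open Matrix Polynomial Finset

/-- Sum over `Fin n` of a function supported on coordinate value `t`. -/
private lemma sum_ite_val {α : Type*} [AddCommMonoid α] {n : ℕ} (f : Fin n → α) (t : ℕ) :
    ∑ i : Fin n, (if (i : ℕ) = t then f i else 0) = if h : t < n then f ⟨t, h⟩ else 0 := by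
  split
  · rename_i h
    rw [Finset.sum_eq_single_of_mem ⟨t, h⟩ (Finset.mem_univ _)
      (fun i _ hi => if_neg (fun hc => hi (Fin.ext hc)))]
    simp
  · rename_i h
    exact Finset.sum_eq_zero fun i _ => if_neg (fun hc : (i:ℕ) = t => h (hc ▸ i.isLt))

set_option maxHeartbeats 2000000 in
theorem stmt_16 {𝕜 : Type*} [Field 𝕜] {V : Type*} [AddCommGroup V] [Module 𝕜 V]
    [FiniteDimensional 𝕜 V] {d : ℕ} (hdim : Module.finrank 𝕜 V = d + 1)
    (A : Module.End 𝕜 V)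
    (Estar : Fin (d + 1) → Module.End 𝕜 V)
    (hidem : ∀ i j, Estar i * Estar j = if i = j then Estar i else 0)
    (hrank : ∀ i, Module.finrank 𝕜 (LinearMap.range (Estar i)) = 1)
    (htri : ∀ i j : Fin (d + 1), 1 < |((i : ℕ) : ℤ) - ((j : ℕ) : ℤ)| → Estar i * A * Estar j = 0)
    (hirr : ∀ i j : Fin (d + 1), |((i : ℕ) : ℤ) - ((j : ℕ) : ℤ)| = 1 → Estar i * A * Estar j ≠ 0)
    (hd : 1 ≤ d)
    (θ : Fin (d + 1) → 𝕜) (hθ : Function.Injective θ)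
    (E : Fin (d + 1) → Module.End 𝕜 V)
    (hEidem : ∀ i j, E i * E j = if i = j then E i else 0)
    (hErank : ∀ i, Module.finrank 𝕜 (LinearMap.range (E i)) = 1)
    (hA : A = ∑ i, θ i • E i)
    (θstar : ℕ → 𝕜)
    (Astar : Module.End 𝕜 V) (hAstar : Astar = ∑ i : Fin (d + 1), θstar (i : ℕ) • Estar i)
    (v : Module.Basis (Fin (d + 1)) 𝕜 V) (hfeas : ∀ i, v i ∈ LinearMap.range (Estar i))
    (a b c : ℕ → 𝕜)
    (hM : ∀ i j : Fin (d + 1), LinearMap.toMatrix v v A i j =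
      if (i : ℕ) = (j : ℕ) then a i
      else if (i : ℕ) + 1 = (j : ℕ) then b i
      else if (j : ℕ) + 1 = (i : ℕ) then c i else 0)
    (ha : ∀ i : Fin (d + 1), a i = LinearMap.trace 𝕜 V (Estar i * A))
    (hb : ∀ i, i < d → b i ≠ 0) (hbd : b d = 0)
    (hc : ∀ i, 0 < i → i ≤ d → c i ≠ 0) (hc0 : c 0 = 0)
    (u : ℕ → Polynomial 𝕜) (hu0 : u 0 = 1)
    (hu : ∀ i, i < d → Polynomial.X * u i =
      Polynomial.C (c i) * u (i - 1) + Polynomial.C (a i) * u i + Polynomial.C (b i) * u (i + 1))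
    (hud : Polynomial.X * u d =
      Polynomial.C (c d) * u (d - 1) + Polynomial.C (a d) * u d +
        Polynomial.C (∏ h ∈ Finset.range d, b h)⁻¹ * u (d + 1))
    (r s : Fin (d + 1)) (hrs : r ≠ s) :
    ((E r * Astar * E s ≠ 0) ∧
        (∀ t : Fin (d + 1), t ≠ s → t ≠ r → E r * Astar * E t = 0))
      ↔
      (LinearMap.trace 𝕜 V (E r * Astar) ≠ θstar 0 ∧
        ∀ i ≤ d,
          (u i).eval (θ s) * (θstar 0 - LinearMap.trace 𝕜 V (E r * Astar))
            = (u i).eval (θ r) * (θstar i - LinearMap.trace 𝕜 V (E r * Astar))) := by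
  classical
  set M : Matrix (Fin (d + 1)) (Fin (d + 1)) 𝕜 := LinearMap.toMatrix v v A with hMdef
  -- the candidate eigenvectors
  set w : Fin (d + 1) → V := fun t => ∑ i : Fin (d + 1), (u (i : ℕ)).eval (θ t) • v i with hwdef
  have hreprw : ∀ t j, v.repr (w t) j = (u (j : ℕ)).eval (θ t) := by
    intro t j
    rw [hwdef]
    simp only [map_sum, LinearEquiv.map_smul, Module.Basis.repr_self]
    rw [Finset.sum_apply']
    simp only [Finsupp.smul_apply, Finsupp.single_apply, smul_eq_mul, mul_ite, mul_one, mul_zero]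
    rw [Finset.sum_ite_eq' Finset.univ j]
    simp
  -- action of `Astar` on the basis
  have hAsv : ∀ i, Astar (v i) = θstar (i : ℕ) • v i := by
    intro i
    obtain ⟨x, hxv⟩ := hfeas i
    have h1 : ∀ j, Estar j (v i) = if j = i then v i else 0 := by
      intro j
      have h2 : (Estar j * Estar i) x = Estar j (v i) := by rw [Module.End.mul_apply, hxv]
      rw [hidem] at h2
      by_cases h : j = i
      · rw [if_pos h] at h2 ⊢
        rw [← h2, h, hxv]
      · rw [if_neg h] at h2 ⊢
        rw [← h2]
        rfl
    rw [hAstar]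
    simp only [LinearMap.sum_apply, LinearMap.smul_apply, h1, smul_ite, smul_zero]
    rw [Finset.sum_ite_eq' Finset.univ i]
    simp
  -- `E j * A = θ j • E j`
  have hEA : ∀ t, E t * A = θ t • E t := by
    intro t
    rw [hA, Finset.mul_sum]
    have h1 : ∀ i, E t * (θ i • E i) = if i = t then θ t • E t else 0 := by
      intro i
      rw [mul_smul_comm, hEidem]
      by_cases h : t = i
      · subst h; simp
      · rw [if_neg h, if_neg (Ne.symm h), smul_zero]
    simp only [h1]
    rw [Finset.sum_ite_eq' Finset.univ t]
    simp
  -- a nonzero vector in each range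
  have hx : ∀ t, ∃ x : V, x ≠ 0 ∧ E t x = x ∧ (∀ j, j ≠ t → E j x = 0) := by
    intro t
    have h1 : LinearMap.range (E t) ≠ ⊥ := by
      intro h
      have h2 := hErank t
      rw [h] at h2
      simp at h2
    obtain ⟨x, hxm, hx0⟩ := Submodule.exists_mem_ne_zero_of_ne_bot h1
    obtain ⟨y, hy⟩ := hxm
    have key : ∀ j, E j x = if j = t then x else 0 := by
      intro j
      have h2 : (E j * E t) y = E j x := by rw [Module.End.mul_apply, hy]
      rw [hEidem] at h2
      by_cases h : j = t
      · rw [if_pos h] at h2 ⊢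
        rw [← h2, h, hy]
      · rw [if_neg h] at h2 ⊢
        rw [← h2]
        rfl
    refine ⟨x, hx0, by simpa using key t, fun j hj => by simpa [hj] using key j⟩
  -- completeness
  have hsumE : (∑ t, E t) = 1 := by
    choose x hx0 hxx hxo using hx
    have li : LinearIndependent 𝕜 x := by
      rw [Fintype.linearIndependent_iff]
      intro g hg j
      have h2 := congrArg (E j) hg
      rw [map_sum, map_zero] at h2
      have h3 : ∀ i, E j (g i • x i) = if i = j then g j • x j else 0 := by
        intro i
        rw [LinearMap.map_smul]
        by_cases h : i = j
        · subst h; simp [hxx]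
        · rw [hxo i j (Ne.symm h), smul_zero, if_neg h]
      rw [Finset.sum_congr rfl (fun i _ => h3 i), Finset.sum_ite_eq' Finset.univ j] at h2
      simp only [Finset.mem_univ, if_true] at h2
      exact (smul_eq_zero.mp h2).resolve_right (hx0 j)
    have hcard : Fintype.card (Fin (d + 1)) = Module.finrank 𝕜 V := by simp [hdim]
    let b' := basisOfLinearIndependentOfCardEqFinrank li hcard
    have hb' : ⇑b' = x := coe_basisOfLinearIndependentOfCardEqFinrank li hcard
    apply b'.ext
    intro i
    rw [hb']
    rw [LinearMap.sum_apply]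
    have h3 : ∀ t, E t (x i) = if t = i then x i else 0 := by
      intro t
      by_cases h : t = i
      · subst h; simp [hxx]
      · rw [hxo i t h, if_neg h]
    rw [Finset.sum_congr rfl (fun t _ => h3 t), Finset.sum_ite_eq' Finset.univ i]
    simp
  -- tridiagonal sums
  have hvm : ∀ (g : Fin (d + 1) → 𝕜) (j : Fin (d + 1)),
      (Matrix.vecMul g M) j =
        (if h : 0 < (j : ℕ) then g ⟨(j : ℕ) - 1, by omega⟩ * b ((j : ℕ) - 1) else 0)
          + g j * a (j : ℕ)
          + (if h : (j : ℕ) < d then g ⟨(j : ℕ) + 1, by omega⟩ * c ((j : ℕ) + 1) else 0) := by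
    intro g j
    have hexp : (Matrix.vecMul g M) j = ∑ i, g i * M i j := by
      simp [Matrix.vecMul, dotProduct]
    rw [hexp]
    have hsplit : ∀ i : Fin (d + 1), g i * M i j =
        (if (i : ℕ) + 1 = (j : ℕ) then g i * b (i : ℕ) else 0)
          + (if (i : ℕ) = (j : ℕ) then g i * a (i : ℕ) else 0)
          + (if (i : ℕ) = (j : ℕ) + 1 then g i * c (i : ℕ) else 0) := by
      intro i
      rw [hM i j]
      split_ifs <;> first | ring1 | (exfalso; omega)
    rw [Finset.sum_congr rfl (fun i _ => hsplit i), Finset.sum_add_distrib,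
      Finset.sum_add_distrib]
    congr 1
    · congr 1
      · by_cases hj : 0 < (j : ℕ)
        · have hcond : ∀ i : Fin (d + 1), ((i : ℕ) + 1 = (j : ℕ)) = ((i : ℕ) = (j : ℕ) - 1) := by
            intro i; apply propext; omega
          simp only [hcond]
          rw [sum_ite_val (fun i => g i * b (i : ℕ)) ((j : ℕ) - 1)]
          rw [dif_pos hj, dif_pos (by omega : (j : ℕ) - 1 < d + 1)]
        · rw [dif_neg hj]
          exact Finset.sum_eq_zero fun i _ => if_neg (by omega)
      · rw [sum_ite_val (fun i => g i * a (i : ℕ)) (j : ℕ), dif_pos j.isLt]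
    · by_cases hj : (j : ℕ) < d
      · rw [sum_ite_val (fun i => g i * c (i : ℕ)) ((j : ℕ) + 1),
          dif_pos (by omega : (j : ℕ) + 1 < d + 1), dif_pos hj]
      · rw [dif_neg hj]
        exact Finset.sum_eq_zero fun i _ => if_neg (by omega)
  have hmv : ∀ (g : Fin (d + 1) → 𝕜) (j : Fin (d + 1)),
      (Matrix.mulVec M g) j =
        (if h : 0 < (j : ℕ) then c (j : ℕ) * g ⟨(j : ℕ) - 1, by omega⟩ else 0)
          + a (j : ℕ) * g j
          + (if h : (j : ℕ) < d then b (j : ℕ) * g ⟨(j : ℕ) + 1, by omega⟩ else 0) := by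
    intro g j
    have hexp : (Matrix.mulVec M g) j = ∑ i, M j i * g i := by
      simp [Matrix.mulVec, dotProduct]
    rw [hexp]
    have hsplit : ∀ i : Fin (d + 1), M j i * g i =
        (if (i : ℕ) + 1 = (j : ℕ) then c (j : ℕ) * g i else 0)
          + (if (i : ℕ) = (j : ℕ) then a (j : ℕ) * g i else 0)
          + (if (i : ℕ) = (j : ℕ) + 1 then b (j : ℕ) * g i else 0) := by
      intro i
      rw [hM j i]
      have hji : ((j : ℕ) = (i : ℕ)) → a (j : ℕ) = a (i : ℕ) := fun h => by rw [h]
      split_ifs <;> first | ring1 | (exfalso; omega)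
    rw [Finset.sum_congr rfl (fun i _ => hsplit i), Finset.sum_add_distrib,
      Finset.sum_add_distrib]
    congr 1
    · congr 1
      · by_cases hj : 0 < (j : ℕ)
        · have hcond : ∀ i : Fin (d + 1), ((i : ℕ) + 1 = (j : ℕ)) = ((i : ℕ) = (j : ℕ) - 1) := by
            intro i; apply propext; omega
          simp only [hcond]
          rw [sum_ite_val (fun i => c (j : ℕ) * g i) ((j : ℕ) - 1)]
          rw [dif_pos hj, dif_pos (by omega : (j : ℕ) - 1 < d + 1)]
        · rw [dif_neg hj]
          exact Finset.sum_eq_zero fun i _ => if_neg (by omega)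
      · rw [sum_ite_val (fun i => a (j : ℕ) * g i) (j : ℕ), dif_pos j.isLt]
    · by_cases hj : (j : ℕ) < d
      · rw [sum_ite_val (fun i => b (j : ℕ) * g i) ((j : ℕ) + 1),
          dif_pos (by omega : (j : ℕ) + 1 < d + 1), dif_pos hj]
      · rw [dif_neg hj]
        exact Finset.sum_eq_zero fun i _ => if_neg (by omega)
  -- A w t = θ t • w t
  have hAw : ∀ t, A (w t) = θ t • w t := by
    intro t
    set U : Fin (d + 1) → 𝕜 := fun i => (u (i : ℕ)).eval (θ t) with hU
    have hrec : ∀ j : Fin (d + 1), (j : ℕ) < d → Matrix.mulVec M U j = θ t * U j := by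
      intro j hj
      have hev := congrArg (Polynomial.eval (θ t)) (hu (j : ℕ) hj)
      simp only [Polynomial.eval_mul, Polynomial.eval_X, Polynomial.eval_add,
        Polynomial.eval_C] at hev
      rw [hmv U j]
      by_cases h0 : 0 < (j : ℕ)
      · rw [dif_pos h0, dif_pos hj]
        simp only [hU]
        exact hev.symm
      · have hj0 : (j : ℕ) = 0 := by omega
        rw [dif_neg h0, dif_pos hj]
        simp only [hU, hj0, hc0, zero_mul, zero_add] at hev ⊢
        exact hev.symm
    obtain ⟨x0, hx00, hx0E, hx0o⟩ := hx t
    have hAx0 : A x0 = θ t • x0 := by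
      rw [hA]
      rw [LinearMap.sum_apply]
      have h1 : ∀ i, (θ i • E i) x0 = if i = t then θ t • x0 else 0 := by
        intro i
        rw [LinearMap.smul_apply]
        by_cases h : i = t
        · subst h; rw [if_pos rfl, hx0E]
        · rw [hx0o i h, smul_zero, if_neg h]
      rw [Finset.sum_congr rfl (fun i _ => h1 i), Finset.sum_ite_eq' Finset.univ t]
      simp
    have hdet : (M - θ t • 1).det = 0 := by
      rw [← Matrix.exists_mulVec_eq_zero_iff]
      refine ⟨v.repr x0, ?_, ?_⟩
      · intro hz
        apply hx00
        have : v.repr x0 = 0 := DFunLike.coe_injective hz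
        simpa using congrArg v.repr.symm this
      · rw [Matrix.sub_mulVec, Matrix.smul_mulVec, Matrix.one_mulVec]
        rw [LinearMap.toMatrix_mulVec_repr v v A x0, hAx0]
        ext j
        simp
    obtain ⟨y, hy0, hyM⟩ := Matrix.exists_vecMul_eq_zero_iff.mpr hdet
    have hyMθ : Matrix.vecMul y M = θ t • y := by
      rw [Matrix.vecMul_sub] at hyM
      rw [sub_eq_zero.mp hyM]
      ext j
      simp [Matrix.vecMul, dotProduct, Matrix.one_apply, mul_ite, Finset.sum_ite_eq,
        mul_comm]
    have hyd : y ⟨d, by omega⟩ ≠ 0 := by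
      intro hzero
      have hall : ∀ m : ℕ, ∀ j : Fin (d + 1), d ≤ (j : ℕ) + m → y j = 0 := by
        intro m
        induction m with
        | zero =>
          intro j hj
          have hjd : j = ⟨d, by omega⟩ := Fin.ext (by simpa using by omega)
          rw [hjd]; exact hzero
        | succ m ih =>
          intro j hj
          by_cases hcase : d ≤ (j : ℕ) + m
          · exact ih j hcase
          · have hj1 : (j : ℕ) + m + 1 = d := by omega
            have hlt : (j : ℕ) + 1 < d + 1 := by omega
            set j' : Fin (d + 1) := ⟨(j : ℕ) + 1, hlt⟩ with hj'
            have h1 : Matrix.vecMul y M j' = θ t * y j' := by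
              rw [hyMθ]; simp
            rw [hvm y j'] at h1
            have hyj' : y j' = 0 := ih j' (by simp [hj']; omega)
            have hz3 : (if h : (j' : ℕ) < d then y ⟨(j' : ℕ) + 1, by omega⟩ * c ((j' : ℕ) + 1)
                else 0) = 0 := by
              by_cases h2 : (j' : ℕ) < d
              · rw [dif_pos h2, ih ⟨(j' : ℕ) + 1, by omega⟩ (by simp [hj']; omega), zero_mul]
              · rw [dif_neg h2]
            have h0j' : 0 < (j' : ℕ) := by simp [hj']
            rw [dif_pos h0j', hz3, hyj'] at h1
            have hjeq : (⟨(j' : ℕ) - 1, by omega⟩ : Fin (d + 1)) = j := by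
              apply Fin.ext; simp [hj']
            rw [hjeq] at h1
            have hbj : b ((j' : ℕ) - 1) = b (j : ℕ) := by simp [hj']
            rw [hbj] at h1
            simp only [zero_mul, add_zero, mul_zero] at h1
            have hbne := hb (j : ℕ) (by omega)
            exact (mul_eq_zero.mp h1).resolve_right hbne
      exact hy0 (funext fun j => hall d j (by omega))
    have hMU : ∀ j, Matrix.mulVec M U j = θ t * U j := by
      intro j
      by_cases hj : (j : ℕ) < d
      · exact hrec j hj
      · have hjd : j = ⟨d, by omega⟩ := Fin.ext (by simp only [Fin.val_mk]; omega)
        have key : ∑ jj, y jj * (Matrix.mulVec M U jj - θ t * U jj) = 0 := by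
          have h1 : dotProduct y (M.mulVec U) = dotProduct (Matrix.vecMul y M) U :=
            dotProduct_mulVec y M U
          rw [hyMθ] at h1
          simp only [dotProduct, Pi.smul_apply, smul_eq_mul] at h1
          rw [Finset.sum_congr rfl (fun jj _ => mul_sub (y jj) (Matrix.mulVec M U jj)
            (θ t * U jj)), Finset.sum_sub_distrib, h1]
          rw [sub_eq_zero]
          exact Finset.sum_congr rfl fun jj _ => by ring
        rw [Finset.sum_eq_single_of_mem (⟨d, by omega⟩ : Fin (d + 1)) (Finset.mem_univ _)
          (fun jj _ hjj => by
            have hjjlt : (jj : ℕ) < d := by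
              rcases Nat.lt_or_ge (jj : ℕ) d with h | h
              · exact h
              · exact absurd (Fin.ext (by omega : (jj : ℕ) = d)) hjj
            rw [hrec jj hjjlt, sub_self, mul_zero])] at key
        have h2 := (mul_eq_zero.mp key).resolve_left hyd
        rw [hjd]
        exact sub_eq_zero.mp h2
    apply v.ext_elem
    intro j
    have h1 : Matrix.mulVec M (v.repr (w t)) = v.repr (A (w t)) :=
      LinearMap.toMatrix_mulVec_repr v v A (w t)
    have h2 : ⇑(v.repr (w t)) = U := funext fun i => hreprw t i
    rw [← h1, h2, hMU j, LinearEquiv.map_smul]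
    simp [hreprw t j, hU]
  have hEw : ∀ t j, j ≠ t → E j (w t) = 0 := by
    intro t j hj
    have h1 : (E j * A) (w t) = θ j • E j (w t) := by rw [hEA j]; rfl
    have h2 : (E j * A) (w t) = θ t • E j (w t) := by
      rw [Module.End.mul_apply, hAw t, LinearMap.map_smul]
    have h3 : (θ j - θ t) • E j (w t) = 0 := by
      rw [sub_smul, ← h1, ← h2, sub_self]
    have h4 : θ j - θ t ≠ 0 := sub_ne_zero.mpr fun h => hj (hθ h)
    exact (smul_eq_zero.mp h3).resolve_left h4
  have hEww : ∀ t, E t (w t) = w t := by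
    intro t
    have h1 := congrArg (fun f : Module.End 𝕜 V => f (w t)) hsumE
    simp only [LinearMap.sum_apply, Module.End.one_apply] at h1
    rw [Finset.sum_eq_single_of_mem t (Finset.mem_univ _)
      (fun j _ hjt => hEw t j hjt)] at h1
    exact h1
  have hw0 : ∀ t, w t ≠ 0 := by
    intro t h
    have h1 := hreprw t 0
    rw [h] at h1
    simp [hu0] at h1
  have hrange : ∀ t, LinearMap.range (E t) = Submodule.span 𝕜 {w t} := by
    intro t
    have h1 : Submodule.span 𝕜 {w t} ≤ LinearMap.range (E t) := by
      rw [Submodule.span_singleton_le_iff_mem]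
      exact ⟨w t, hEww t⟩
    exact (Submodule.eq_of_le_of_finrank_le h1
      (by rw [hErank t, finrank_span_singleton (hw0 t)])).symm
  have hf : ∀ x : V, E r x = (v.repr (E r x) 0) • (w r) := by
    intro x
    have h1 : E r x ∈ Submodule.span 𝕜 {w r} := by
      rw [← hrange r]
      exact LinearMap.mem_range_self (E r) x
    obtain ⟨k, hk⟩ := Submodule.mem_span_singleton.mp h1
    have h2 : v.repr (E r x) 0 = k := by
      rw [← hk, LinearEquiv.map_smul, Finsupp.smul_apply, hreprw r 0]
      simp [hu0]
    rw [h2, hk]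
  set T : 𝕜 := LinearMap.trace 𝕜 V (E r * Astar) with hTdef
  have hAswsum : ∀ t, Astar (w t)
      = ∑ i : Fin (d + 1), (θstar (i : ℕ) * (u (i : ℕ)).eval (θ t)) • v i := by
    intro t
    rw [hwdef]
    rw [map_sum]
    exact Finset.sum_congr rfl fun i _ => by
      rw [LinearMap.map_smul, hAsv i, smul_smul, mul_comm]
  have hreprAsw : ∀ t j, v.repr (Astar (w t)) j = θstar (j : ℕ) * (u (j : ℕ)).eval (θ t) := by
    intro t j
    rw [hAswsum t, map_sum, Finset.sum_apply']
    simp only [LinearEquiv.map_smul, Finsupp.smul_apply, Module.Basis.repr_self,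
      Finsupp.single_apply, smul_eq_mul, mul_ite, mul_one, mul_zero]
    rw [Finset.sum_ite_eq' Finset.univ j]
    simp
  have hcoord : ∀ (x : V) (jj : Fin (d + 1)),
      v.repr (E r x) jj = v.repr (E r x) 0 * (u (jj : ℕ)).eval (θ r) := by
    intro x jj
    conv_lhs => rw [hf x]
    rw [LinearEquiv.map_smul, Finsupp.smul_apply, hreprw r jj, smul_eq_mul]
  have htr : T = ∑ i : Fin (d + 1),
      θstar (i : ℕ) * (v.repr (E r (v i)) 0 * (u (i : ℕ)).eval (θ r)) := by
    rw [hTdef, LinearMap.trace_eq_matrix_trace 𝕜 v, Matrix.trace]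
    apply Finset.sum_congr rfl
    intro i _
    rw [Matrix.diag_apply, LinearMap.toMatrix_apply, Module.End.mul_apply, hAsv i,
      LinearMap.map_smul, LinearEquiv.map_smul, Finsupp.smul_apply, hcoord (v i) i,
      smul_eq_mul]
  have hErAsw : E r (Astar (w r)) = T • w r := by
    rw [hAswsum r, map_sum]
    have h3 : ∀ i : Fin (d + 1), E r ((θstar (i : ℕ) * (u (i : ℕ)).eval (θ r)) • v i)
        = (θstar (i : ℕ) * (u (i : ℕ)).eval (θ r) * v.repr (E r (v i)) 0) • w r := by
      intro i
      conv_lhs => rw [LinearMap.map_smul, hf (v i)]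
      rw [smul_smul]
    rw [Finset.sum_congr rfl (fun i _ => h3 i), ← Finset.sum_smul]
    congr 1
    rw [htr]
    exact Finset.sum_congr rfl fun i _ => by ring
  -- symmetry
  -- the symmetrizing diagonal weights
  have hsymm : ∀ t t', (E t * Astar * E t' = 0) ↔ (E t' * Astar * E t = 0) := by
    set k : ℕ → 𝕜 := fun n => Nat.rec 1 (fun m km => km * b m * (c (m + 1))⁻¹) n with hkdef
    have hksucc : ∀ m, k (m + 1) = k m * b m * (c (m + 1))⁻¹ := fun m => rfl
    have hknz : ∀ m, m ≤ d → k m ≠ 0 := by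
      intro m
      induction m with
      | zero => intro _; exact one_ne_zero
      | succ m ih =>
        intro hm
        rw [hksucc]
        exact mul_ne_zero (mul_ne_zero (ih (by omega)) (hb m (by omega)))
          (inv_ne_zero (hc (m + 1) (by omega) hm))
    have key : ∀ p : ℕ, p + 1 ≤ d → k p * b p = c (p + 1) * k (p + 1) := by
      intro p hp
      rw [hksucc p]
      have hcne := hc (p + 1) (by omega) hp
      field_simp
    set K : Matrix (Fin (d + 1)) (Fin (d + 1)) 𝕜 := Matrix.diagonal (fun i => k (i : ℕ))
      with hKdef
    have hKM : K * M = Mᵀ * K := by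
      ext i j
      rw [hKdef, Matrix.diagonal_mul, Matrix.mul_diagonal, Matrix.transpose_apply]
      rw [hM i j, hM j i]
      by_cases p1 : (i : ℕ) = (j : ℕ)
      · rw [if_pos p1, if_pos p1.symm, p1]
        ring
      · by_cases p2 : (i : ℕ) + 1 = (j : ℕ)
        · rw [if_pos p2, if_neg p1, if_neg (Ne.symm p1),
            if_neg (by omega : ¬(j : ℕ) + 1 = (i : ℕ)), if_pos p2, ← p2]
          exact key (i : ℕ) (by omega)
        · by_cases p3 : (j : ℕ) + 1 = (i : ℕ)
          · rw [if_neg p1, if_neg p2, if_pos p3, if_neg (Ne.symm p1), if_pos p3, ← p3]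
            have h5 := key (j : ℕ) (by omega)
            linear_combination -h5
          · rw [if_neg p1, if_neg p2, if_neg p3, if_neg (Ne.symm p1), if_neg p3, if_neg p2]
            ring
    have hKpow : ∀ n : ℕ, K * M ^ n = (M ^ n)ᵀ * K := by
      intro n
      induction n with
      | zero => simp
      | succ n ih =>
        calc K * M ^ (n + 1) = K * M ^ n * M := by rw [pow_succ, mul_assoc]
          _ = (M ^ n)ᵀ * (K * M) := by rw [ih, mul_assoc]
          _ = (M ^ n)ᵀ * Mᵀ * K := by rw [hKM, mul_assoc]
          _ = (M * M ^ n)ᵀ * K := by rw [Matrix.transpose_mul]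
          _ = (M ^ (n + 1))ᵀ * K := by rw [← pow_succ']
    have hKaeval : ∀ p : Polynomial 𝕜,
        K * (Polynomial.aeval M p) = (Polynomial.aeval M p)ᵀ * K := by
      intro p
      induction p using Polynomial.induction_on' with
      | add p q hp hq =>
        rw [map_add, mul_add, Matrix.transpose_add, add_mul, hp, hq]
      | monomial n aa =>
        rw [Polynomial.aeval_monomial, ← Algebra.smul_def, mul_smul_comm, hKpow,
          Matrix.transpose_smul, smul_mul_assoc]
    have hApow : ∀ n : ℕ, A ^ n = ∑ i, (θ i ^ n) • E i := by
      intro n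
      induction n with
      | zero =>
        rw [pow_zero, ← hsumE]
        exact Finset.sum_congr rfl fun i _ => by rw [pow_zero, one_smul]
      | succ n ih =>
        rw [pow_succ, ih, Finset.sum_mul]
        exact Finset.sum_congr rfl fun i _ => by
          rw [smul_mul_assoc, hEA i, smul_smul, ← pow_succ]
    have hAaeval : ∀ p : Polynomial 𝕜,
        Polynomial.aeval A p = ∑ i, (p.eval (θ i)) • E i := by
      intro p
      induction p using Polynomial.induction_on' with
      | add p q hp hq =>
        rw [map_add, hp, hq, ← Finset.sum_add_distrib]
        exact Finset.sum_congr rfl fun i _ => by rw [Polynomial.eval_add, add_smul]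
      | monomial n aa =>
        rw [Polynomial.aeval_monomial, ← Algebra.smul_def, hApow, Finset.smul_sum]
        exact Finset.sum_congr rfl fun i _ => by
          rw [Polynomial.eval_monomial, smul_smul]
    have hElag : ∀ t, E t = Polynomial.aeval A (Lagrange.basis Finset.univ θ t) := by
      intro t
      rw [hAaeval]
      have h1 : ∀ i : Fin (d + 1),
          (Lagrange.basis Finset.univ θ t).eval (θ i) • E i = if i = t then E t else 0 := by
        intro i
        by_cases h : i = t
        · subst h
          rw [Lagrange.eval_basis_self (Set.injOn_of_injective hθ) (Finset.mem_univ i),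
            one_smul, if_pos rfl]
        · rw [Lagrange.eval_basis_of_ne (Ne.symm h) (Finset.mem_univ i),
            zero_smul, if_neg h]
      rw [Finset.sum_congr rfl fun i _ => h1 i, Finset.sum_ite_eq' Finset.univ t]
      simp
    have hKE : ∀ t, K * (LinearMap.toMatrix v v (E t))
        = (LinearMap.toMatrix v v (E t))ᵀ * K := by
      intro t
      have h1 : LinearMap.toMatrix v v (E t)
          = Polynomial.aeval M (Lagrange.basis Finset.univ θ t) := by
        rw [hElag t]
        exact (Polynomial.aeval_algHom_apply (LinearMap.toMatrixAlgEquiv v) A _).symm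
      rw [h1]
      exact hKaeval _
    have hKAs : K * (LinearMap.toMatrix v v Astar)
        = (LinearMap.toMatrix v v Astar)ᵀ * K := by
      have hD : LinearMap.toMatrix v v Astar = Matrix.diagonal (fun i : Fin (d + 1) => θstar (i : ℕ)) := by
        ext i j
        rw [LinearMap.toMatrix_apply, hAsv j, LinearEquiv.map_smul, Finsupp.smul_apply,
          Module.Basis.repr_self]
        by_cases h : i = j
        · subst h
          rw [Matrix.diagonal_apply_eq]
          simp
        · rw [Matrix.diagonal_apply_ne _ h, Finsupp.single_apply, if_neg (Ne.symm h)]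
          simp
      rw [hD, hKdef, Matrix.diagonal_transpose, Matrix.diagonal_mul_diagonal,
        Matrix.diagonal_mul_diagonal]
      have hcomm : (fun i : Fin (d + 1) => k (i : ℕ) * θstar (i : ℕ))
          = fun i : Fin (d + 1) => θstar (i : ℕ) * k (i : ℕ) := funext fun i => mul_comm _ _
      rw [hcomm]
    have hcore : ∀ t t', (E t * Astar * E t' = 0) → (E t' * Astar * E t = 0) := by
      intro t t' h
      set X := LinearMap.toMatrix v v (E t') with hX
      set D := LinearMap.toMatrix v v Astar with hDD
      set Y := LinearMap.toMatrix v v (E t) with hY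
      have h0 : Y * D * X = 0 := by
        rw [hX, hDD, hY, ← LinearMap.toMatrix_mul, ← LinearMap.toMatrix_mul, h, map_zero]
      have h2 : K * (X * D * Y) = 0 := by
        have efin : (Y * D * X)ᵀ * K = Xᵀ * (Dᵀ * (Yᵀ * K)) := by
          rw [Matrix.transpose_mul, Matrix.transpose_mul, mul_assoc, mul_assoc]
        calc K * (X * D * Y) = ((K * X) * D) * Y := by rw [← mul_assoc, ← mul_assoc]
          _ = ((Xᵀ * K) * D) * Y := by rw [hKE t']
          _ = Xᵀ * ((K * D) * Y) := by rw [mul_assoc Xᵀ K D, mul_assoc Xᵀ (K * D) Y]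
          _ = Xᵀ * ((Dᵀ * K) * Y) := by rw [hKAs]
          _ = Xᵀ * (Dᵀ * (K * Y)) := by rw [mul_assoc]
          _ = Xᵀ * (Dᵀ * (Yᵀ * K)) := by rw [hKE t]
          _ = (Y * D * X)ᵀ * K := efin.symm
          _ = 0 := by rw [h0, Matrix.transpose_zero, Matrix.zero_mul]
      have h3 : X * D * Y = 0 := by
        ext i j
        have h4 := congrFun (congrFun h2 i) j
        rw [hKdef, Matrix.diagonal_mul] at h4
        have h5 : k (i : ℕ) ≠ 0 := hknz (i : ℕ) (by omega)
        simpa [Matrix.zero_apply] using (mul_eq_zero.mp h4).resolve_left h5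
      have h6 : LinearMap.toMatrix v v (E t' * Astar * E t) = 0 := by
        rw [LinearMap.toMatrix_mul, LinearMap.toMatrix_mul, ← hX, ← hDD, ← hY, h3]
      have h7 := (LinearMap.toMatrix v v).injective
      rw [← map_zero (LinearMap.toMatrix v v)] at h6
      exact h7 h6
    exact fun t t' => ⟨hcore t t', hcore t' t⟩
  have hcomp : ∀ (t : Fin (d + 1)) (x : V),
      (E t * Astar * E r) x = (v.repr (E r x) 0) • (E t (Astar (w r))) := by
    intro t x
    rw [Module.End.mul_apply, Module.End.mul_apply]
    conv_lhs => rw [hf x]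
    rw [LinearMap.map_smul, LinearMap.map_smul]
  have hcomp0 : ∀ t : Fin (d + 1), (E t * Astar * E r = 0) ↔ E t (Astar (w r)) = 0 := by
    intro t
    constructor
    · intro h
      have h1 := congrArg (fun f : Module.End 𝕜 V => f (w r)) h
      simp only [LinearMap.zero_apply] at h1
      rw [hcomp t (w r)] at h1
      have h2 : v.repr (E r (w r)) 0 = 1 := by
        rw [hEww r, hreprw r 0]
        simp [hu0]
      rw [h2, one_smul] at h1
      exact h1
    · intro h
      apply LinearMap.ext
      intro x
      rw [hcomp t x, h, smul_zero, LinearMap.zero_apply]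
  constructor
  · rintro ⟨h1, h2⟩
    have h2' : ∀ t, t ≠ s → t ≠ r → E t (Astar (w r)) = 0 := fun t hts htr =>
      (hcomp0 t).mp ((hsymm t r).mpr (h2 t hts htr))
    have hdec : Astar (w r) = ∑ t, E t (Astar (w r)) := by
      have h3 := congrArg (fun f : Module.End 𝕜 V => f (Astar (w r))) hsumE
      simp only [LinearMap.sum_apply, Module.End.one_apply] at h3
      exact h3.symm
    have hsum2' : ∑ t, E t (Astar (w r)) = E r (Astar (w r)) + E s (Astar (w r)) := by
      rw [← Finset.sum_subset (Finset.subset_univ {r, s}) (fun t _ ht => by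
        have hts : t ≠ s := fun e => ht (by simp [e])
        have htr' : t ≠ r := fun e => ht (by simp [e])
        exact h2' t hts htr')]
      rw [Finset.sum_pair hrs]
    have hsum2 : Astar (w r) = E r (Astar (w r)) + E s (Astar (w r)) :=
      hdec.trans hsum2'
    have hmem : E s (Astar (w r)) ∈ Submodule.span 𝕜 {w s} := by
      rw [← hrange s]
      exact LinearMap.mem_range_self (E s) (Astar (w r))
    obtain ⟨μ, hμ⟩ := Submodule.mem_span_singleton.mp hmem
    rw [hErAsw, ← hμ] at hsum2
    have hμval : μ = θstar 0 - T := by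
      have h3 := congrArg (fun z => v.repr z 0) hsum2
      rw [hreprAsw r 0, map_add, Finsupp.add_apply, LinearEquiv.map_smul,
        Finsupp.smul_apply, LinearEquiv.map_smul, Finsupp.smul_apply, hreprw r 0,
        hreprw s 0, smul_eq_mul, smul_eq_mul] at h3
      simp only [Fin.val_zero, hu0, Polynomial.eval_one, mul_one] at h3
      linear_combination -h3
    have hEsAs : E s (Astar (w r)) ≠ 0 := by
      intro h0
      exact h1 ((hsymm r s).mpr ((hcomp0 s).mpr h0))
    have hne : T ≠ θstar 0 := by
      intro hT0
      apply hEsAs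
      rw [← hμ, hμval, hT0, sub_self, zero_smul]
    refine ⟨hne, ?_⟩
    intro i hi
    have h4 := congrArg (fun z => v.repr z ⟨i, by omega⟩) hsum2
    rw [hreprAsw r ⟨i, by omega⟩, map_add, Finsupp.add_apply, LinearEquiv.map_smul,
      Finsupp.smul_apply, LinearEquiv.map_smul, Finsupp.smul_apply,
      hreprw r ⟨i, by omega⟩, hreprw s ⟨i, by omega⟩, smul_eq_mul, smul_eq_mul,
      hμval] at h4
    simp only [Fin.val_mk] at h4
    linear_combination -h4
  · rintro ⟨hT, heq⟩
    have hTne : θstar 0 - T ≠ 0 := sub_ne_zero.mpr (Ne.symm hT)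
    have hdecomp : Astar (w r) = T • w r + (θstar 0 - T) • w s := by
      apply v.ext_elem
      intro j
      rw [hreprAsw r j, map_add, Finsupp.add_apply, LinearEquiv.map_smul,
        Finsupp.smul_apply, LinearEquiv.map_smul, Finsupp.smul_apply, hreprw r j,
        hreprw s j, smul_eq_mul, smul_eq_mul]
      have h5 := heq (j : ℕ) (by omega)
      linear_combination -h5
    refine ⟨?_, ?_⟩
    · intro h0
      have h6 : E s (Astar (w r)) = 0 := (hcomp0 s).mp ((hsymm r s).mp h0)
      rw [hdecomp, map_add, LinearMap.map_smul, LinearMap.map_smul,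
        hEw r s (Ne.symm hrs), hEww s, smul_zero, zero_add] at h6
      exact smul_ne_zero hTne (hw0 s) h6
    · intro t hts htr
      have h7 : E t (Astar (w r)) = 0 := by
        rw [hdecomp, map_add, LinearMap.map_smul, LinearMap.map_smul,
          hEw r t htr, hEw s t hts, smul_zero, smul_zero, add_zero]
      exact (hsymm r t).mpr ((hcomp0 t).mpr h7)
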